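/- Every finite undirected graph G = (V,E) contains an induced k-degenerate subgraph on at least Σ_{v∈V} min(1, k/(d(v)+1)) vertices. -/

import Mathlib

/-- A set `T` is closed under the threshold-`k` activation rule: every vertex with at
least `k` neighbors in `T` belongs to `T`. -/
def ClosedUnder {V : Type*} (G : SimpleGraph V) (k : ℕ) (T : Set V) : Prop :=
  ∀ v : V, k ≤ {u : V | G.Adj v u ∧ u ∈ T}.ncard → v ∈ T

/-- `A` is contagious with threshold `k`: the activation process starting from `A`
(equivalently, the least `ClosedUnder`-closed superset of `A`) activates every vertex. -/
def Contagious {V : Type*} (G : SimpleGraph V) (k : ℕ) (A : Set V) : Prop :=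
  ∀ T : Set V, A ⊆ T → ClosedUnder G k T → ∀ v : V, v ∈ T

open Finset

private lemma g_anti (k : ℕ) {a b : ℕ} (h : a ≤ b) :
    min 1 ((k : ℝ) / (b + 1)) ≤ min 1 ((k : ℝ) / (a + 1)) := by
  apply min_le_min le_rfl
  apply div_le_div_of_nonneg_left (by positivity) (by positivity)
  have : (a : ℝ) ≤ b := Nat.cast_le.mpr h
  linarith

private lemma aux_degen {V : Type*} [Fintype V] [DecidableEq V] (G : SimpleGraph V)
    [DecidableRel G.Adj] (k : ℕ) (hk : 0 < k) (s : Finset V) :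
    ∃ S ⊆ s,
      (∑ v ∈ s, min 1 ((k : ℝ) / ((s.filter (fun u => G.Adj v u)).card + 1))) ≤ S.card ∧
      ∀ t ⊆ S, t.Nonempty → ∃ v ∈ t, (t.filter (fun u => G.Adj v u)).card < k := by
  induction s using Finset.strongInduction with
  | _ s IH =>
  rcases s.eq_empty_or_nonempty with rfl | hne
  · exact ⟨∅, Subset.rfl, by simp, fun t ht htne => absurd (subset_empty.mp ht) htne.ne_empty⟩
  by_cases hlow : ∃ v ∈ s, ((s.filter (fun u => G.Adj v u)).card < k)
  · -- there is a low-degree vertex: include it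
    obtain ⟨v, hv, hvd⟩ := hlow
    obtain ⟨S, hSsub, hScard, hSdeg⟩ := IH (s.erase v) (erase_ssubset hv)
    have hvS : v ∉ S := fun h => (notMem_erase v s) (hSsub h)
    refine ⟨insert v S, insert_subset hv (hSsub.trans (erase_subset v s)), ?_, ?_⟩
    · rw [card_insert_of_notMem hvS]
      push_cast
      calc (∑ u ∈ s, min 1 ((k : ℝ) / ((s.filter (fun w => G.Adj u w)).card + 1)))
          = min 1 ((k : ℝ) / ((s.filter (fun w => G.Adj v w)).card + 1)) +
            ∑ u ∈ s.erase v, min 1 ((k : ℝ) / ((s.filter (fun w => G.Adj u w)).card + 1)) := by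
            rw [add_comm, Finset.sum_erase_add _ _ hv]
        _ ≤ 1 + ∑ u ∈ s.erase v,
              min 1 ((k : ℝ) / (((s.erase v).filter (fun w => G.Adj u w)).card + 1)) := by
            exact add_le_add (min_le_left _ _) (Finset.sum_le_sum fun u _ =>
              g_anti k (card_le_card (filter_subset_filter _ (erase_subset v s))))
        _ ≤ 1 + S.card := by gcongr
        _ = S.card + 1 := by ring
    · intro t ht htne
      by_cases hvt : v ∈ t
      · refine ⟨v, hvt, lt_of_le_of_lt (card_le_card ?_) hvd⟩
        intro u hu
        simp only [mem_filter] at hu ⊢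
        refine ⟨?_, hu.2⟩
        rcases mem_insert.mp (ht hu.1) with rfl | h
        · exact absurd hu.2 (G.irrefl)
        · exact (erase_subset v s) (hSsub h)
      · refine hSdeg t (fun u hu => ?_) htne
        rcases mem_insert.mp (ht hu) with rfl | h
        · exact absurd hu hvt
        · exact h
  · -- all degrees ≥ k: delete a maximum-degree vertex
    push_neg at hlow
    obtain ⟨v, hv, hmax⟩ :=
      s.exists_max_image (fun u => (s.filter (fun w => G.Adj u w)).card) hne
    set d := (s.filter (fun w => G.Adj v w)).card with hd
    have hkd : k ≤ d := hlow v hv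
    have hd0 : 0 < d := lt_of_lt_of_le hk hkd
    have hd0' : (0 : ℝ) < d := by exact_mod_cast hd0
    obtain ⟨S, hSsub, hScard, hSdeg⟩ := IH (s.erase v) (erase_ssubset hv)
    refine ⟨S, hSsub.trans (erase_subset v s), le_trans ?_ hScard, hSdeg⟩
    have hfilter_eq :
        (s.erase v).filter (fun u => G.Adj v u) = s.filter (fun u => G.Adj v u) := by
      rw [Finset.filter_erase]
      exact erase_eq_of_notMem (by simp)
    have key : min 1 ((k : ℝ) / (d + 1)) ≤
        ∑ u ∈ s.erase v,
          (min 1 ((k : ℝ) / (((s.erase v).filter (fun w => G.Adj u w)).card + 1))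
            - min 1 ((k : ℝ) / ((s.filter (fun w => G.Adj u w)).card + 1))) := by
      have hnonneg : ∀ u ∈ s.erase v,
          0 ≤ min 1 ((k : ℝ) / (((s.erase v).filter (fun w => G.Adj u w)).card + 1))
            - min 1 ((k : ℝ) / ((s.filter (fun w => G.Adj u w)).card + 1)) := fun u _ =>
        sub_nonneg.mpr (g_anti k (card_le_card (filter_subset_filter _ (erase_subset v s))))
      have hstep : ∀ u ∈ (s.erase v).filter (fun u => G.Adj v u),
          (k : ℝ) / d - (k : ℝ) / (d + 1) ≤
          min 1 ((k : ℝ) / (((s.erase v).filter (fun w => G.Adj u w)).card + 1))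
            - min 1 ((k : ℝ) / ((s.filter (fun w => G.Adj u w)).card + 1)) := by
        intro u hu
        obtain ⟨hu', hadj⟩ := mem_filter.mp hu
        have hus : u ∈ s := (erase_subset v s) hu'
        set m := (s.filter (fun w => G.Adj u w)).card with hm
        have hkm : k ≤ m := hlow u hus
        have hm1 : 1 ≤ m := hk.trans_le hkm
        have hmd : m ≤ d := hmax u hus
        have hm0' : (0 : ℝ) < m := by positivity
        have hcard' : ((s.erase v).filter (fun w => G.Adj u w)).card = m - 1 := by
          rw [Finset.filter_erase, card_erase_of_mem (mem_filter.mpr ⟨hv, hadj.symm⟩)]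
        rw [hcard']
        have hcast : ((m - 1 : ℕ) : ℝ) + 1 = m := by
          rw [Nat.cast_sub hm1]; push_cast; ring
        rw [hcast]
        have e1 : min 1 ((k : ℝ) / m) = (k : ℝ) / m :=
          min_eq_right ((div_le_one hm0').mpr (Nat.cast_le.mpr hkm))
        have e2 : min 1 ((k : ℝ) / (m + 1)) = (k : ℝ) / (m + 1) :=
          min_eq_right ((div_le_one (by positivity)).mpr
            (by have : (k : ℝ) ≤ m := Nat.cast_le.mpr hkm; linarith))
        rw [e1, e2]
        have hdiff : ∀ x : ℝ, 0 < x → (k : ℝ) / x - (k : ℝ) / (x + 1) = k / (x * (x + 1)) := by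
          intro x hx; field_simp; ring
        rw [hdiff _ hd0', hdiff _ hm0']
        apply div_le_div_of_nonneg_left (by positivity) (by positivity)
        have hmd' : (m : ℝ) ≤ d := Nat.cast_le.mpr hmd
        nlinarith
      calc min 1 ((k : ℝ) / (d + 1)) ≤ (k : ℝ) / (d + 1) := min_le_right _ _
        _ = d * ((k : ℝ) / d - (k : ℝ) / (d + 1)) := by field_simp; ring
        _ = ((s.erase v).filter (fun u => G.Adj v u)).card •
              ((k : ℝ) / d - (k : ℝ) / (d + 1)) := by
            rw [hfilter_eq, nsmul_eq_mul]
        _ ≤ ∑ u ∈ (s.erase v).filter (fun u => G.Adj v u),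
              (min 1 ((k : ℝ) / (((s.erase v).filter (fun w => G.Adj u w)).card + 1))
                - min 1 ((k : ℝ) / ((s.filter (fun w => G.Adj u w)).card + 1))) :=
            Finset.card_nsmul_le_sum _ _ _ hstep
        _ ≤ _ := sum_le_sum_of_subset_of_nonneg (filter_subset _ _)
            (fun u hu _ => hnonneg u hu)
    have hsplit : ∑ u ∈ s, min 1 ((k : ℝ) / ((s.filter (fun w => G.Adj u w)).card + 1))
        = min 1 ((k : ℝ) / (d + 1)) +
          ∑ u ∈ s.erase v, min 1 ((k : ℝ) / ((s.filter (fun w => G.Adj u w)).card + 1)) := by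
      rw [add_comm, Finset.sum_erase_add _ _ hv]
    rw [hsplit, Finset.sum_sub_distrib] at *
    linarith [key]

theorem stmt_5 {V : Type*} [Fintype V] [DecidableEq V] (G : SimpleGraph V)
    [DecidableRel G.Adj] (k : ℕ) (hk : 0 < k) :
    ∃ s : Finset V, (∑ v : V, min 1 ((k : ℝ) / (G.degree v + 1))) ≤ s.card ∧
      ∀ t ⊆ s, t.Nonempty → ∃ v ∈ t, (t.filter (fun u => G.Adj v u)).card < k := by
  obtain ⟨S, _, hcard, hdeg⟩ := aux_degen G k hk Finset.univ
  refine ⟨S, ?_, hdeg⟩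
  have hdeg_eq : ∀ v : V, G.degree v = (Finset.univ.filter (fun u => G.Adj v u)).card :=
    fun v => by rw [← SimpleGraph.neighborFinset_eq_filter]; rfl
  simp_rw [hdeg_eq]
  exact hcard
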